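/- Let n ≥ 1 and let v_C : {0,1}^n × {0,1}^n → ℝ, v_A : {0,1}^n → ℝ, v_B : {0,1}^n → ℝ. Consider the 2n-player binary-action game in which Alice's players i ∈ {1,…,n} jointly choose a ∈ {0,1}^n (player i chooses the bit a_i), Bob's players i ∈ {1,…,n} jointly choose b ∈ {0,1}^n, each of Alice's players receives utility u_A(a,b) = v_C(a,b) + v_A(a), and each of Bob's players receives utility u_B(a,b) = v_C(a,b) + v_B(b). Then there exists a 2n-player congestion game over a facility set M with |M| = 2^{2n} + 2^{n+1}, in which each player has exactly two feasible subsets of M (one for each value of his bit), such that for every (a,b) ∈ {0,1}^n × {0,1}^n, the congestion-game utility of every Alice player at the profile of feasible subsets corresponding to (a,b) equals u_A(a,b), and that of every Bob player equals u_B(a,b). -/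

import Mathlib

open Finset

abbrev M6 (n : ℕ) := ((Fin n → Bool) × (Fin n → Bool)) ⊕ ((Fin n → Bool) ⊕ (Fin n → Bool))

def mem6 {n : ℕ} : (Fin n ⊕ Fin n) → Bool → M6 n → Bool
  | Sum.inl i, β, Sum.inl (x, _) => x i == β
  | Sum.inl i, β, Sum.inr (Sum.inl x) => x i == β
  | Sum.inl _, _, Sum.inr (Sum.inr _) => false
  | Sum.inr i, β, Sum.inl (_, y) => y i == β
  | Sum.inr _, _, Sum.inr (Sum.inl _) => false
  | Sum.inr i, β, Sum.inr (Sum.inr y) => y i == β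

def cost6 {n : ℕ} (vC : (Fin n → Bool) → (Fin n → Bool) → ℝ)
    (vA vB : (Fin n → Bool) → ℝ) : M6 n → ℕ → ℝ
  | Sum.inl (x, y), k => if k = 2 * n then vC x y else 0
  | Sum.inr (Sum.inl x), k => if k = n then vA x else 0
  | Sum.inr (Sum.inr y), k => if k = n then vB y else 0

lemma card_M6 (n : ℕ) : Fintype.card (M6 n) = 2 ^ (2 * n) + 2 ^ (n + 1) := by
  simp [Fintype.card_sum, Fintype.card_prod, two_mul, pow_add, pow_succ]
  ring

def cnt6 {n : ℕ} (x a : Fin n → Bool) : ℕ := (univ.filter (fun i => x i = a i)).card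

lemma cnt6_eq_sum {n : ℕ} (x a : Fin n → Bool) :
    cnt6 x a = ∑ i : Fin n, if x i = a i then 1 else 0 := by
  unfold cnt6
  rw [Finset.card_filter]

lemma cnt6_le {n : ℕ} (x a : Fin n → Bool) : cnt6 x a ≤ n :=
  le_trans (card_filter_le _ _) (by simp)

lemma cnt6_eq_iff {n : ℕ} (x a : Fin n → Bool) : cnt6 x a = n ↔ x = a := by
  constructor
  · intro h
    have heq : univ.filter (fun i => x i = a i) = univ :=
      Finset.eq_of_subset_of_card_le (filter_subset _ _) (by simp [cnt6] at h; simp [h])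
    funext i
    have hi : i ∈ univ.filter (fun i => x i = a i) := by rw [heq]; exact mem_univ i
    exact (mem_filter.mp hi).2
  · rintro rfl; simp [cnt6]

lemma cnt6_self {n : ℕ} (a : Fin n → Bool) : cnt6 a a = n := (cnt6_eq_iff a a).mpr rfl

/-- congestion of each facility at profile `(a, b)` -/
lemma cong_inl {n : ℕ} (a b x y : Fin n → Bool) :
    (∑ p : Fin n ⊕ Fin n, if mem6 p (Sum.elim a b p) (Sum.inl (x, y)) then (1:ℕ) else 0)
      = cnt6 x a + cnt6 y b := by
  rw [Fintype.sum_sum_type, cnt6_eq_sum, cnt6_eq_sum]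
  simp only [mem6, Sum.elim_inl, Sum.elim_inr, beq_iff_eq]

lemma cong_inr_inl {n : ℕ} (a b x : Fin n → Bool) :
    (∑ p : Fin n ⊕ Fin n, if mem6 p (Sum.elim a b p) (Sum.inr (Sum.inl x)) then (1:ℕ) else 0)
      = cnt6 x a := by
  rw [Fintype.sum_sum_type, cnt6_eq_sum]
  simp only [mem6, Sum.elim_inl, Sum.elim_inr, beq_iff_eq]
  simp

lemma cong_inr_inr {n : ℕ} (a b y : Fin n → Bool) :
    (∑ p : Fin n ⊕ Fin n, if mem6 p (Sum.elim a b p) (Sum.inr (Sum.inr y)) then (1:ℕ) else 0)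
      = cnt6 y b := by
  rw [Fintype.sum_sum_type, cnt6_eq_sum]
  simp only [mem6, Sum.elim_inl, Sum.elim_inr, beq_iff_eq]
  simp

lemma keyA {n : ℕ} (vC : (Fin n → Bool) → (Fin n → Bool) → ℝ)
    (vA vB : (Fin n → Bool) → ℝ) (a b : Fin n → Bool) (i : Fin n) :
    (∑ m ∈ univ.filter (fun m => mem6 (Sum.inl i) (a i) m),
      cost6 vC vA vB m (∑ p : Fin n ⊕ Fin n, if mem6 p (Sum.elim a b p) m then 1 else 0))
      = vC a b + vA a := by
  rw [sum_filter, Fintype.sum_sum_type, Fintype.sum_sum_type]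
  have h1 : (∑ z : (Fin n → Bool) × (Fin n → Bool),
      if mem6 (Sum.inl i) (a i) (Sum.inl z) then
        cost6 vC vA vB (Sum.inl z)
          (∑ p : Fin n ⊕ Fin n, if mem6 p (Sum.elim a b p) (Sum.inl z) then 1 else 0) else 0)
      = vC a b := by
    rw [Fintype.sum_eq_single (a, b)]
    · rw [cong_inl a b a b]
      simp [mem6, cost6, cnt6_self, two_mul]
    · rintro ⟨x, y⟩ hz
      have hne : cnt6 x a + cnt6 y b ≠ 2 * n := by
        intro h
        have hx := cnt6_le x a; have hy := cnt6_le y b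
        have hxy : cnt6 x a = n ∧ cnt6 y b = n := by omega
        exact hz (Prod.ext ((cnt6_eq_iff x a).mp hxy.1) ((cnt6_eq_iff y b).mp hxy.2))
      rw [cong_inl a b x y]
      simp [mem6, cost6, hne]
  have h2 : (∑ x : Fin n → Bool,
      if mem6 (Sum.inl i) (a i) (Sum.inr (Sum.inl x)) then
        cost6 vC vA vB (Sum.inr (Sum.inl x))
          (∑ p : Fin n ⊕ Fin n,
            if mem6 p (Sum.elim a b p) (Sum.inr (Sum.inl x)) then 1 else 0) else 0)
      = vA a := by
    rw [Fintype.sum_eq_single a]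
    · rw [cong_inr_inl a b a]
      simp [mem6, cost6, cnt6_self]
    · intro x hx
      have hne : cnt6 x a ≠ n := fun h => hx ((cnt6_eq_iff x a).mp h)
      rw [cong_inr_inl a b x]
      simp [mem6, cost6, hne]
  have h3 : (∑ y : Fin n → Bool,
      if mem6 (Sum.inl i) (a i) (Sum.inr (Sum.inr y)) then
        cost6 vC vA vB (Sum.inr (Sum.inr y))
          (∑ p : Fin n ⊕ Fin n,
            if mem6 p (Sum.elim a b p) (Sum.inr (Sum.inr y)) then 1 else 0) else 0)
      = 0 := by
    simp [mem6]
  rw [h1, h2, h3, add_zero]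

lemma keyB {n : ℕ} (vC : (Fin n → Bool) → (Fin n → Bool) → ℝ)
    (vA vB : (Fin n → Bool) → ℝ) (a b : Fin n → Bool) (i : Fin n) :
    (∑ m ∈ univ.filter (fun m => mem6 (Sum.inr i) (b i) m),
      cost6 vC vA vB m (∑ p : Fin n ⊕ Fin n, if mem6 p (Sum.elim a b p) m then 1 else 0))
      = vC a b + vB b := by
  rw [sum_filter, Fintype.sum_sum_type, Fintype.sum_sum_type]
  have h1 : (∑ z : (Fin n → Bool) × (Fin n → Bool),
      if mem6 (Sum.inr i) (b i) (Sum.inl z) then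
        cost6 vC vA vB (Sum.inl z)
          (∑ p : Fin n ⊕ Fin n, if mem6 p (Sum.elim a b p) (Sum.inl z) then 1 else 0) else 0)
      = vC a b := by
    rw [Fintype.sum_eq_single (a, b)]
    · rw [cong_inl a b a b]
      simp [mem6, cost6, cnt6_self, two_mul]
    · rintro ⟨x, y⟩ hz
      have hne : cnt6 x a + cnt6 y b ≠ 2 * n := by
        intro h
        have hx := cnt6_le x a; have hy := cnt6_le y b
        have hxy : cnt6 x a = n ∧ cnt6 y b = n := by omega
        exact hz (Prod.ext ((cnt6_eq_iff x a).mp hxy.1) ((cnt6_eq_iff y b).mp hxy.2))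
      rw [cong_inl a b x y]
      simp [mem6, cost6, hne]
  have h2 : (∑ x : Fin n → Bool,
      if mem6 (Sum.inr i) (b i) (Sum.inr (Sum.inl x)) then
        cost6 vC vA vB (Sum.inr (Sum.inl x))
          (∑ p : Fin n ⊕ Fin n,
            if mem6 p (Sum.elim a b p) (Sum.inr (Sum.inl x)) then 1 else 0) else 0)
      = 0 := by
    simp [mem6]
  have h3 : (∑ y : Fin n → Bool,
      if mem6 (Sum.inr i) (b i) (Sum.inr (Sum.inr y)) then
        cost6 vC vA vB (Sum.inr (Sum.inr y))
          (∑ p : Fin n ⊕ Fin n,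
            if mem6 p (Sum.elim a b p) (Sum.inr (Sum.inr y)) then 1 else 0) else 0)
      = vB b := by
    rw [Fintype.sum_eq_single b]
    · rw [cong_inr_inr a b b]
      simp [mem6, cost6, cnt6_self]
    · intro y hy
      have hne : cnt6 y b ≠ n := fun h => hy ((cnt6_eq_iff y b).mp h)
      rw [cong_inr_inr a b y]
      simp [mem6, cost6, hne]
  rw [h1, h2, h3, zero_add]

/-- every `2n`-player binary-action "structured" game, in which Alice's
players jointly choose `a ∈ {0,1}^n`, Bob's players jointly choose `b ∈ {0,1}^n`, each
Alice player gets `v_C(a,b) + v_A(a)` and each Bob player gets `v_C(a,b) + v_B(b)`, can be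
represented as a `2n`-player congestion game with `2^{2n} + 2^{n+1}` facilities in which
every player has exactly two feasible subsets (one for each value of his bit): at the
profile of feasible subsets corresponding to `(a,b)`, the congestion-game utility of each
Alice player equals `u_A(a,b)` and of each Bob player equals `u_B(a,b)`. -/
theorem stmt6 (n : ℕ) (hn : 1 ≤ n)
    (vC : (Fin n → Bool) → (Fin n → Bool) → ℝ)
    (vA vB : (Fin n → Bool) → ℝ) :
    ∃ (c : Fin (2 ^ (2 * n) + 2 ^ (n + 1)) → ℕ → ℝ)
      (F : (Fin n ⊕ Fin n) → Bool → Finset (Fin (2 ^ (2 * n) + 2 ^ (n + 1)))),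
      ∀ a b : Fin n → Bool,
        (∀ i : Fin n,
          (∑ j ∈ F (Sum.inl i) (a i),
            c j (∑ p : Fin n ⊕ Fin n,
              if j ∈ Sum.elim (fun i' => F (Sum.inl i') (a i'))
                              (fun i' => F (Sum.inr i') (b i')) p then 1 else 0))
            = vC a b + vA a) ∧
        (∀ i : Fin n,
          (∑ j ∈ F (Sum.inr i) (b i),
            c j (∑ p : Fin n ⊕ Fin n,
              if j ∈ Sum.elim (fun i' => F (Sum.inl i') (a i'))
                              (fun i' => F (Sum.inr i') (b i')) p then 1 else 0))
            = vC a b + vB b) := by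
  classical
  let e : M6 n ≃ Fin (2 ^ (2 * n) + 2 ^ (n + 1)) := Fintype.equivFinOfCardEq (card_M6 n)
  refine ⟨fun j k => cost6 vC vA vB (e.symm j) k,
    fun p β => (univ.filter (fun m => mem6 p β m)).image e, fun a b => ?_⟩
  have hmem : ∀ (p : Fin n ⊕ Fin n) (β : Bool) (m : M6 n),
      (e m ∈ (univ.filter (fun m => mem6 p β m)).image e) ↔ mem6 p β m := by
    intro p β m
    simp [Finset.mem_image, e.injective.eq_iff]
  have hcong : ∀ m : M6 n,
      (∑ p : Fin n ⊕ Fin n,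
        if e m ∈ Sum.elim
            (fun i' => (univ.filter (fun m => mem6 (Sum.inl i') (a i') m)).image e)
            (fun i' => (univ.filter (fun m => mem6 (Sum.inr i') (b i') m)).image e) p
          then 1 else 0)
        = ∑ p : Fin n ⊕ Fin n, if mem6 p (Sum.elim a b p) m then (1:ℕ) else 0 := by
    intro m
    refine Finset.sum_congr rfl fun p _ => ?_
    cases p <;> simp [hmem] <;> congr
  constructor
  · intro i
    rw [Finset.sum_image (fun m _ m' _ h => e.injective h)]
    calc (∑ m ∈ univ.filter (fun m => mem6 (Sum.inl i) (a i) m),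
          cost6 vC vA vB (e.symm (e m))
            (∑ p : Fin n ⊕ Fin n,
              if e m ∈ Sum.elim
                  (fun i' => (univ.filter (fun m => mem6 (Sum.inl i') (a i') m)).image e)
                  (fun i' => (univ.filter (fun m => mem6 (Sum.inr i') (b i') m)).image e) p
                then 1 else 0))
        = ∑ m ∈ univ.filter (fun m => mem6 (Sum.inl i) (a i) m),
          cost6 vC vA vB m
            (∑ p : Fin n ⊕ Fin n, if mem6 p (Sum.elim a b p) m then 1 else 0) := by
          refine Finset.sum_congr rfl fun m _ => ?_
          rw [Equiv.symm_apply_apply, hcong m]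
      _ = vC a b + vA a := keyA vC vA vB a b i
  · intro i
    rw [Finset.sum_image (fun m _ m' _ h => e.injective h)]
    calc (∑ m ∈ univ.filter (fun m => mem6 (Sum.inr i) (b i) m),
          cost6 vC vA vB (e.symm (e m))
            (∑ p : Fin n ⊕ Fin n,
              if e m ∈ Sum.elim
                  (fun i' => (univ.filter (fun m => mem6 (Sum.inl i') (a i') m)).image e)
                  (fun i' => (univ.filter (fun m => mem6 (Sum.inr i') (b i') m)).image e) p
                then 1 else 0))
        = ∑ m ∈ univ.filter (fun m => mem6 (Sum.inr i) (b i) m),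
          cost6 vC vA vB m
            (∑ p : Fin n ⊕ Fin n, if mem6 p (Sum.elim a b p) m then 1 else 0) := by
          refine Finset.sum_congr rfl fun m _ => ?_
          rw [Equiv.symm_apply_apply, hcong m]
      _ = vC a b + vB b := keyB vC vA vB a b i
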